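/- arXiv:2411.09672 — 5 statements merged into one kernel-verified Lean document; each statement's English description precedes it below -/
import Mathlib

section
/- Let G be a finite simple graph that is connected and has at least one edge. Then the tangent graph tG equals the complete tangent graph τG (i.e., they have the same edges on the common vertex set of darts of G) if and only if G is a star graph K_{1,n} with n ≥ 1, i.e., there exists a vertex c such that every edge of G is incident to c. -/
open Finset SimpleGraph

/-- The tangent graph `tG` of a simple graph `G`: vertices are the darts of `G`,
with `u, v` adjacent iff `π₊(u) = π(v)` or `π(u) = π₊(v)`. -/
def tangentGraph {V : Type*} (G : SimpleGraph V) : SimpleGraph G.Dart where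
  Adj u v := u.snd = v.fst ∨ u.fst = v.snd
  symm := ⟨fun u v h => h.symm.imp Eq.symm Eq.symm⟩
  loopless := ⟨fun u h => h.elim (fun h1 => u.snd_ne_fst h1) (fun h2 => u.fst_ne_snd h2)⟩

/-- The complete tangent graph `τG` of a simple graph `G`: vertices are the darts of `G`,
with `u, v` adjacent iff their base points are adjacent in `G`. -/
def completeTangentGraph {V : Type*} (G : SimpleGraph V) : SimpleGraph G.Dart where
  Adj u v := G.Adj u.fst v.fst
  symm := ⟨fun u v h => h.symm⟩
  loopless := ⟨fun u h => G.loopless.irrefl _ h⟩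

instance {V : Type*} [DecidableEq V] (G : SimpleGraph V) :
    DecidableRel (tangentGraph G).Adj :=
  fun u v => inferInstanceAs (Decidable (u.snd = v.fst ∨ u.fst = v.snd))

instance {V : Type*} (G : SimpleGraph V) [DecidableRel G.Adj] :
    DecidableRel (completeTangentGraph G).Adj :=
  fun u v => inferInstanceAs (Decidable (G.Adj u.fst v.fst))

/-- The darts of `G` based at the vertex `i`. -/
def dartsAt {V : Type*} [Fintype V] [DecidableEq V] (G : SimpleGraph V)
    [DecidableRel G.Adj] (i : V) : Finset G.Dart :=
  Finset.univ.filter fun u => u.fst = i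

/-- The coefficient function `dφ` of the gradient of `φ`. -/
def dop {V : Type*} (G : SimpleGraph V) (φ : V → ℝ) (u : G.Dart) : ℝ :=
  φ u.snd - φ u.fst

/-- The Laplacian of `φ : V → ℝ` on `G`, `Δφ(i) = -2·Σ_{π(u)=i} dφ(u)`. -/
def gLap {V : Type*} [Fintype V] [DecidableEq V] (G : SimpleGraph V)
    [DecidableRel G.Adj] (φ : V → ℝ) (i : V) : ℝ :=
  -2 * ∑ u ∈ dartsAt G i, dop G φ u

/-- The Laplacian of a real function on the vertices of an arbitrary finite simple graph:
`Δ_H h(x) = -2·Σ_{y ~ x} (h y - h x)`. -/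
def lap {W : Type*} [Fintype W] (H : SimpleGraph W) [DecidableRel H.Adj]
    (h : W → ℝ) (x : W) : ℝ :=
  -2 * ∑ y ∈ H.neighborFinset x, (h y - h x)

/-- The divergence of `f : Darts(G) → ℝ`, `Div f(i) = Σ_{π(u)=i} (f(ū) - f(u))`. -/
def divg {V : Type*} [Fintype V] [DecidableEq V] (G : SimpleGraph V)
    [DecidableRel G.Adj] (f : G.Dart → ℝ) (i : V) : ℝ :=
  ∑ u ∈ dartsAt G i, (f u.symm - f u)

/-- For a connected graph with at least one edge, `tG = τG` iff `G` is a
star graph `K_{1,n}`, `n ≥ 1`, i.e. some vertex `c` is incident to every edge of `G`. -/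
theorem tangentGraph_eq_completeTangentGraph_iff_star {V : Type*} [Fintype V]
    (G : SimpleGraph V) (hconn : G.Connected) (hedge : ∃ i j : V, G.Adj i j) :
    tangentGraph G = completeTangentGraph G ↔
      ∃ c : V, ∀ i j : V, G.Adj i j → i = c ∨ j = c := by
  constructor
  · intro heq
    obtain ⟨a, b, hab⟩ := hedge
    have K : ∀ i j k l, G.Adj j i → G.Adj k l → G.Adj j k → i = k ∨ l = j := by
      intro i j k l hji hkl hjk
      have h : (tangentGraph G).Adj ⟨(j, i), hji⟩ ⟨(k, l), hkl⟩ := by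
        rw [heq]; exact hjk
      exact h.imp id Eq.symm
    have closure : ∀ c, (∀ y w, G.Adj c y → G.Adj y w → w = c) →
        ∀ i j, G.Adj i j → i = c ∨ j = c := by
      intro c huniq i j hij
      have reach : ∀ u v, G.Walk u v → (u = c ∨ G.Adj c u) → (v = c ∨ G.Adj c v) := by
        intro u v p
        induction p with
        | nil => exact id
        | cons h p ih =>
          intro hu
          apply ih
          rcases hu with rfl | hcu
          · exact Or.inr h
          · exact Or.inl (huniq _ _ hcu h)
      rcases reach c i (hconn c i).some (Or.inl rfl) with rfl | hci
      · exact Or.inl rfl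
      · exact Or.inr (huniq _ _ hci hij)
    by_cases hB : ∃ b', G.Adj a b' ∧ b' ≠ b
    · obtain ⟨b', hab', hb'⟩ := hB
      refine ⟨a, closure a ?_⟩
      intro y w hay hyw
      rcases eq_or_ne y b with rfl | hyb
      · rcases K b' a y w hab' hyw hay with h | h
        · exact absurd h hb'
        · exact h
      · rcases K b a y w hab hyw hay with h | h
        · exact absurd h (Ne.symm hyb)
        · exact h
    · push_neg at hB
      refine ⟨b, closure b ?_⟩
      intro y w hby hyw
      rcases eq_or_ne y a with rfl | hya
      · exact hB w hyw
      · rcases K a b y w hab.symm hyw hby with h | h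
        · exact absurd h (Ne.symm hya)
        · exact h
  · rintro ⟨c, hc⟩
    ext u v
    show (u.snd = v.fst ∨ u.fst = v.snd) ↔ G.Adj u.fst v.fst
    have hu := u.adj
    have hv := v.adj
    rcases hc _ _ hu with hu1 | hu2 <;> rcases hc _ _ hv with hv1 | hv2
    · rw [hu1] at hu
      rw [hv1] at hv
      rw [hu1, hv1]
      constructor
      · rintro (h | h)
        · rw [h] at hu; exact (G.irrefl hu).elim
        · rw [← h] at hv; exact (G.irrefl hv).elim
      · intro h
        exact (G.irrefl h).elim
    · rw [hv2] at hv
      rw [hu1, hv2]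
      constructor
      · intro _; exact hv.symm
      · intro _; exact Or.inr rfl
    · rw [hu2] at hu
      rw [hu2, hv1]
      constructor
      · intro _; exact hu
      · intro _; exact Or.inl rfl
    · rw [hu2] at hu
      rw [hv2] at hv
      rw [hu2, hv2]
      constructor
      · rintro (h | h)
        · rw [← h] at hv; exact (G.irrefl hv).elim
        · rw [h] at hu; exact (G.irrefl hu).elim
      · intro h
        rcases hc _ _ h with h1 | h1
        · rw [h1] at hu; exact (G.irrefl hu).elim
        · rw [h1] at hv; exact (G.irrefl hv).elim
end

section
/- Let H and K be finite simple graphs and let h : H → K be a graph homomorphism. Define the differential dh on darts of H by dh(u) = (h(π(u)), h(π₊(u))), which is a dart of K. Then dh is a graph homomorphism from the tangent graph tH to the tangent graph tK: whenever darts u, v are adjacent in tH, the darts dh(u), dh(v) are adjacent in tK. -/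
open Finset SimpleGraph

/-- The differential of a graph homomorphism `h : H → K` is a graph
homomorphism `dh : tH → tK`. -/
theorem mapDart_hom_tangentGraph {VH VK : Type*} [Fintype VH] [Fintype VK]
    (H : SimpleGraph VH) (K : SimpleGraph VK) (h : H →g K)
    (u v : H.Dart) (huv : (tangentGraph H).Adj u v) :
    (tangentGraph K).Adj (h.mapDart u) (h.mapDart v) := by
  rcases huv with h1 | h2
  · left; simp [Hom.mapDart, h1]
  · right; simp [Hom.mapDart, h2]
end

section
/- Let G be a finite simple graph. Then twice the number of edges of the complete tangent graph τG equals Σ over ordered pairs (i, j) of adjacent vertices of G of deg_G(i)·deg_G(j); equivalently, 2·|E(τG)| = Σ_{i ∈ V} deg_G(i) · (Σ_{j adjacent to i} deg_G(j)). -/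
open Finset SimpleGraph

/-- `2·|E_{τG}| = Σ_i deg_G(i) · (A deg)(i)`. -/
theorem card_edges_completeTangentGraph {V : Type*} [Fintype V] [DecidableEq V]
    (G : SimpleGraph V) [DecidableRel G.Adj] :
    2 * (completeTangentGraph G).edgeFinset.card
      = ∑ i : V, G.degree i * ∑ j ∈ G.neighborFinset i, G.degree j := by
  have hdeg : ∀ u : G.Dart, (completeTangentGraph G).degree u
      = ∑ j ∈ G.neighborFinset u.fst, G.degree j := by
    intro u
    rw [← SimpleGraph.card_neighborFinset_eq_degree]
    have h1 : (completeTangentGraph G).neighborFinset u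
        = Finset.univ.filter fun v : G.Dart => G.Adj u.fst v.fst := by
      ext v; rw [SimpleGraph.mem_neighborFinset]; simp [completeTangentGraph]
    rw [h1, Finset.card_eq_sum_card_fiberwise
      (f := fun v : G.Dart => v.fst) (t := G.neighborFinset u.fst)
      (fun v hv => by simpa using (Finset.mem_filter.mp hv).2)]
    refine Finset.sum_congr rfl fun j hj => ?_
    rw [← G.dart_fst_fiber_card_eq_degree j]
    congr 1
    ext v
    simp only [Finset.mem_filter, Finset.mem_univ, true_and, Set.mem_toFinset,
      Set.mem_setOf_eq]
    constructor
    · rintro ⟨_, h⟩; exact h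
    · rintro h; subst h; exact ⟨(G.mem_neighborFinset _ _).mp hj, rfl⟩
  rw [← SimpleGraph.sum_degrees_eq_twice_card_edges]
  calc ∑ u : G.Dart, (completeTangentGraph G).degree u
      = ∑ u : G.Dart, ∑ j ∈ G.neighborFinset u.fst, G.degree j :=
        Finset.sum_congr rfl fun u _ => hdeg u
    _ = ∑ i : V, ∑ u ∈ Finset.univ.filter (fun v : G.Dart => v.fst = i),
          ∑ j ∈ G.neighborFinset u.fst, G.degree j := by
        exact (Finset.sum_fiberwise Finset.univ (fun v : G.Dart => v.fst)
          fun u => ∑ j ∈ G.neighborFinset u.fst, G.degree j).symm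
    _ = ∑ i : V, G.degree i * ∑ j ∈ G.neighborFinset i, G.degree j := by
        refine Finset.sum_congr rfl fun i _ => ?_
        rw [Finset.sum_congr rfl (fun u hu => by
          rw [(Finset.mem_filter.mp hu).2]), Finset.sum_const, smul_eq_mul]
        congr 1
        rw [← G.dart_fst_fiber_card_eq_degree i]
end

section
/- Let G be a finite simple graph and let M : V → V → ℝ satisfy: (i) M(i, j) = 0 whenever i ≠ j and i, j are not adjacent in G; and (ii) for every ψ : V → ℝ that is constant on each connected component of G (i.e., ψ(i) = ψ(j) whenever i and j are joined by a walk) and every vertex i, Σ_{j ∈ V} M(i, j)·ψ(j) = 0. Then for every φ : V → ℝ and every vertex i, Σ_{j ∈ V} M(i, j)·φ(j) = Σ_{u : π(u) = i} M(π(u), π₊(u))·dφ(u), the last sum ranging over darts based at i. In particular every first order differential operator on G is given by a vector field X(u) = M(π(u), π₊(u)) acting by Xφ(i) = Σ_{π(u)=i} X(u)·dφ(u). -/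
open Finset SimpleGraph

/-- Every first order differential operator `M` on `G` is given by the
vector field `X(u) = M(π(u), π₊(u))` acting by `Xφ(i) = Σ_{π(u)=i} X(u)·dφ(u)`. -/
theorem firstOrder_operator_eq_vectorField {V : Type*} [Fintype V] [DecidableEq V]
    (G : SimpleGraph V) [DecidableRel G.Adj] (M : V → V → ℝ)
    (h1 : ∀ i j : V, i ≠ j → ¬G.Adj i j → M i j = 0)
    (h2 : ∀ ψ : V → ℝ, (∀ i j : V, G.Reachable i j → ψ i = ψ j) →
        ∀ i : V, ∑ j : V, M i j * ψ j = 0)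
    (φ : V → ℝ) (i : V) :
    ∑ j : V, M i j * φ j = ∑ u ∈ dartsAt G i, M u.fst u.snd * dop G φ u := by
  classical
  have hconst : ∀ a b, G.Reachable a b →
      (if G.Reachable i a then φ i else 0) = (if G.Reachable i b then φ i else 0) := by
    intro a b hab
    by_cases ha : G.Reachable i a
    · rw [if_pos ha, if_pos (ha.trans hab)]
    · rw [if_neg ha, if_neg (fun hb => ha (hb.trans hab.symm))]
  have h0 := h2 (fun j => if G.Reachable i j then φ i else 0) hconst i
  have key : ∑ j : V, M i j * φ j
      = ∑ j : V, M i j * (φ j - if G.Reachable i j then φ i else 0) := by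
    have : ∑ j : V, M i j * (φ j - if G.Reachable i j then φ i else 0)
        = (∑ j : V, M i j * φ j)
          - ∑ j : V, M i j * (if G.Reachable i j then φ i else 0) := by
      rw [← Finset.sum_sub_distrib]
      exact Finset.sum_congr rfl fun j _ => by ring
    rw [this, h0, sub_zero]
  have hneigh : ∑ u ∈ dartsAt G i, M u.fst u.snd * dop G φ u
      = ∑ j ∈ G.neighborFinset i, M i j * (φ j - φ i) := by
    apply Finset.sum_bij (fun u _ => u.snd)
    · intro u hu
      simp only [dartsAt, Finset.mem_filter, Finset.mem_univ, true_and] at hu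
      simp only [SimpleGraph.mem_neighborFinset]
      rw [← hu]; exact u.adj
    · intro u hu v hv huv
      simp only [dartsAt, Finset.mem_filter, Finset.mem_univ, true_and] at hu hv
      exact SimpleGraph.Dart.ext _ _ (Prod.ext (hu.trans hv.symm) huv)
    · intro j hj
      simp only [SimpleGraph.mem_neighborFinset] at hj
      exact ⟨SimpleGraph.Dart.mk (i, j) hj, by simp [dartsAt], rfl⟩
    · intro u hu
      simp only [dartsAt, Finset.mem_filter, Finset.mem_univ, true_and] at hu
      simp [dop, hu]
  rw [key, hneigh]
  rw [← Finset.sum_subset (Finset.subset_univ (G.neighborFinset i))]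
  · apply Finset.sum_congr rfl
    intro j hj
    simp only [SimpleGraph.mem_neighborFinset] at hj
    rw [if_pos hj.reachable]
  · intro j _ hj
    simp only [SimpleGraph.mem_neighborFinset] at hj
    by_cases hij : i = j
    · subst hij
      rw [if_pos (SimpleGraph.Reachable.refl i)]
      ring
    · rw [h1 i j hij hj, zero_mul]
end

section
/- Let G be a finite simple graph and φ : V → ℝ. Then for every vertex i, Div(Δ_{tG}(dφ))(i) = Δ(Δφ)(i) − 4·Δφ(i) − 4·Σ_{u : π(u) = i} (deg_G(π₊(u)) + deg_G(π(u)))·dφ(u), where dφ : Darts(G) → ℝ is the coefficient function of the gradient ∇φ, Δ_{tG} is the Laplacian of the tangent graph tG acting on functions on Darts(G), and Div f(i) = Σ_{u : π(u) = i} (f(ū) − f(u)). -/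
open Finset SimpleGraph

section Aux
variable {V : Type*} [Fintype V] [DecidableEq V] (G : SimpleGraph V) [DecidableRel G.Adj] (φ : V → ℝ)

lemma dartsAt_card (i : V) : (dartsAt G i).card = G.degree i :=
  G.dart_fst_fiber_card_eq_degree i

lemma snd_fiber_eq (i : V) :
    (Finset.univ.filter fun v : G.Dart => v.snd = i) = (dartsAt G i).image Dart.symm := by
  ext v
  simp only [mem_filter, mem_univ, true_and, mem_image, dartsAt]
  constructor
  · intro h
    exact ⟨v.symm, by simp [h], by simp⟩
  · rintro ⟨a, ⟨-, ha⟩, rfl⟩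
    simpa using ha

lemma symm_inj : Function.Injective (Dart.symm : G.Dart → G.Dart) :=
  Function.Involutive.injective (fun d => Dart.symm_symm d)

lemma sum_snd_fiber (i : V) :
    ∑ v ∈ Finset.univ.filter (fun v : G.Dart => v.snd = i), dop G φ v
      = - ∑ v ∈ dartsAt G i, dop G φ v := by
  rw [snd_fiber_eq, Finset.sum_image (fun a _ b _ h => symm_inj G h), ← Finset.sum_neg_distrib]
  exact Finset.sum_congr rfl fun a _ => by simp [dop, Dart.symm]

lemma lap_tangent_eq (u : G.Dart) :
    lap (tangentGraph G) (dop G φ) u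
      = dop G (gLap G φ) u
        + (2 * (G.degree u.fst : ℝ) + 2 * (G.degree u.snd : ℝ) - 4) * dop G φ u := by
  have hN : (tangentGraph G).neighborFinset u
      = (Finset.univ.filter fun v : G.Dart => v.fst = u.snd)
        ∪ (Finset.univ.filter fun v : G.Dart => v.snd = u.fst) := by
    ext v
    simp only [mem_neighborFinset, mem_union, mem_filter, mem_univ, true_and]
    constructor
    · rintro (h | h)
      · exact Or.inl h.symm
      · exact Or.inr h.symm
    · rintro (h | h)
      · exact Or.inl h.symm
      · exact Or.inr h.symm
  have hI : (Finset.univ.filter fun v : G.Dart => v.fst = u.snd)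
      ∩ (Finset.univ.filter fun v : G.Dart => v.snd = u.fst) = {u.symm} := by
    ext v
    simp only [mem_inter, mem_filter, mem_univ, true_and, mem_singleton]
    constructor
    · rintro ⟨h1, h2⟩
      apply Dart.ext
      exact Prod.ext h1 h2
    · rintro rfl
      exact ⟨rfl, rfl⟩
  have key : ∑ v ∈ (tangentGraph G).neighborFinset u, (dop G φ v - dop G φ u)
      = (∑ v ∈ Finset.univ.filter (fun v : G.Dart => v.fst = u.snd), (dop G φ v - dop G φ u))
        + (∑ v ∈ Finset.univ.filter (fun v : G.Dart => v.snd = u.fst), (dop G φ v - dop G φ u))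
        - (dop G φ u.symm - dop G φ u) := by
    rw [hN, eq_sub_iff_add_eq, ← Finset.sum_singleton (fun v => dop G φ v - dop G φ u) u.symm,
      ← hI]
    exact Finset.sum_union_inter
  have e1 : ∑ v ∈ Finset.univ.filter (fun v : G.Dart => v.fst = u.snd),
      (dop G φ v - dop G φ u)
      = (∑ v ∈ dartsAt G u.snd, dop G φ v) - (G.degree u.snd : ℝ) * dop G φ u := by
    rw [Finset.sum_sub_distrib, Finset.sum_const, ← dartsAt_card]
    simp [dartsAt, nsmul_eq_mul]
  have e2 : ∑ v ∈ Finset.univ.filter (fun v : G.Dart => v.snd = u.fst),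
      (dop G φ v - dop G φ u)
      = (- ∑ v ∈ dartsAt G u.fst, dop G φ v) - (G.degree u.fst : ℝ) * dop G φ u := by
    rw [Finset.sum_sub_distrib, sum_snd_fiber, Finset.sum_const, snd_fiber_eq,
      Finset.card_image_of_injective _ (symm_inj G), dartsAt_card]
    simp [nsmul_eq_mul]
  have e3 : dop G φ u.symm = - dop G φ u := by simp [dop, Dart.symm]
  have hd : dop G (gLap G φ) u
      = (-2 * ∑ v ∈ dartsAt G u.snd, dop G φ v) - (-2 * ∑ v ∈ dartsAt G u.fst, dop G φ v) := rfl
  rw [lap, key, e1, e2, e3, hd]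
  ring

theorem div_lapTangent_grad' (i : V) :
    (∑ u ∈ dartsAt G i, ((lap (tangentGraph G) (dop G φ)) u.symm - (lap (tangentGraph G) (dop G φ)) u))
      = gLap G (gLap G φ) i - 4 * gLap G φ i
        - 4 * ∑ u ∈ dartsAt G i,
            ((G.degree u.snd : ℝ) + (G.degree u.fst : ℝ)) * dop G φ u := by
  have step : ∀ u ∈ dartsAt G i,
      (lap (tangentGraph G) (dop G φ)) u.symm - (lap (tangentGraph G) (dop G φ)) u
      = -2 * dop G (gLap G φ) u + 8 * dop G φ u
        - 4 * ((G.degree u.snd : ℝ) + (G.degree u.fst : ℝ)) * dop G φ u := by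
    intro u _
    rw [lap_tangent_eq, lap_tangent_eq]
    have h1 : dop G (gLap G φ) u.symm = - dop G (gLap G φ) u := by simp [dop, Dart.symm]
    have h2 : dop G φ u.symm = - dop G φ u := by simp [dop, Dart.symm]
    have h3 : (u.symm.fst : V) = u.snd := rfl
    have h4 : (u.symm.snd : V) = u.fst := rfl
    rw [h1, h2, h3, h4]
    ring
  rw [Finset.sum_congr rfl step]
  have h5 : ∑ u ∈ dartsAt G i, 4 * (((G.degree u.snd):ℝ) + ((G.degree u.fst):ℝ)) * dop G φ u
      = 4 * ∑ u ∈ dartsAt G i, (((G.degree u.snd):ℝ) + ((G.degree u.fst):ℝ)) * dop G φ u := by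
    rw [Finset.mul_sum]; exact Finset.sum_congr rfl (fun u _ => by ring)
  rw [Finset.sum_sub_distrib, Finset.sum_add_distrib, ← Finset.mul_sum, ← Finset.mul_sum, h5,
    show (gLap G (gLap G φ) i) = -2 * ∑ u ∈ dartsAt G i, dop G (gLap G φ) u from rfl,
    show (gLap G φ i) = -2 * ∑ u ∈ dartsAt G i, dop G φ u from rfl]
  ring

end Aux

/-- `Div Δ_{tG} ∇φ(i) = Δ²φ(i) - 4Δφ(i) - 4Dφ(i)` where
`D(u) = deg(π₊(u)) + deg(π(u))`. -/
theorem div_lapTangent_grad {V : Type*} [Fintype V] [DecidableEq V]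
    (G : SimpleGraph V) [DecidableRel G.Adj] (φ : V → ℝ) (i : V) :
    divg G (lap (tangentGraph G) (dop G φ)) i
      = gLap G (gLap G φ) i - 4 * gLap G φ i
        - 4 * ∑ u ∈ dartsAt G i,
            ((G.degree u.snd : ℝ) + (G.degree u.fst : ℝ)) * dop G φ u := by
  exact div_lapTangent_grad' G φ i
end
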